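/- Let G be a simple graph, let s ≠ t be vertices of G, and let p, k ∈ ℕ. Let D(G) be the directed graph on the vertices of G in which (u,v) is an arc if and only if {u,v} is an edge of G (each edge replaced by two anti-parallel arcs). Then there exists a family of p s-t paths in G with at most k shared edges if and only if there exists a family of p directed s-t paths in D(G) with at most k shared arcs. -/

import Mathlib

/-- The set of shared edges of a family of `s`-`t` walks (an edge is shared if it
occurs in two walks with distinct indices). -/
def sharedEdges {V : Type*} {G : SimpleGraph V} {s t : V} {p : ℕ}
    (P : Fin p → G.Walk s t) : Set (Sym2 V) :=
  {e | ∃ i j, i ≠ j ∧ e ∈ (P i).edges ∧ e ∈ (P j).edges}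

/-- The arcs (consecutive pairs of vertices) of a finite vertex sequence. -/
def arcs {V : Type*} (l : List V) : List (V × V) := l.zip l.tail

/-- `l` is an `r`-path from `s` to `t`: a finite sequence of pairwise distinct
vertices starting at `s`, ending at `t`, with consecutive vertices related by `r`.
Taking `r` to be the arc relation of `D(G)` (an arc `(u,v)` for each edge `{u,v}`
of `G`), this is a directed `s`-`t` path in `D(G)`. -/
def IsRPath {V : Type*} (r : V → V → Prop) (s t : V) (l : List V) : Prop :=
  l.Chain' r ∧ l.Nodup ∧ l.head? = some s ∧ l.getLast? = some t

/-- The set of shared arcs of a family of directed paths: arcs lying on two paths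
with distinct indices. -/
def sharedArcs {V : Type*} {p : ℕ} (P : Fin p → List V) : Set (V × V) :=
  {e | ∃ i j, i ≠ j ∧ e ∈ arcs (P i) ∧ e ∈ arcs (P j)}

namespace Scratch
open SimpleGraph Walk

variable {V : Type*} {G : SimpleGraph V}

def dartsP {a b : V} (w : G.Walk a b) : List (V × V) := w.darts.map SimpleGraph.Dart.toProd

@[simp] lemma dartsP_nil {a : V} : dartsP (Walk.nil : G.Walk a a) = [] := rfl

@[simp] lemma dartsP_cons {a b c : V} (h : G.Adj a b) (w : G.Walk b c) :
    dartsP (Walk.cons h w) = (a, b) :: dartsP w := rfl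

lemma dartsP_append {a b c : V} (w : G.Walk a b) (w' : G.Walk b c) :
    dartsP (w.append w') = dartsP w ++ dartsP w' := by
  simp [dartsP, Walk.darts_append]

lemma arcs_support {a b : V} (w : G.Walk a b) : arcs w.support = dartsP w := by
  induction w with
  | nil => rfl
  | @cons a v b h w ih =>
    rw [Walk.support_cons, w.support_eq_cons]
    rw [w.support_eq_cons] at ih
    simp only [arcs, List.zip, List.tail_cons, List.zipWith_cons_cons] at ih ⊢
    rw [ih, dartsP_cons]

lemma edge_of_dartsP {a b u v : V} {w : G.Walk a b} (h : (u, v) ∈ dartsP w) :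
    s(u, v) ∈ w.edges := by
  obtain ⟨d, hd, hdp⟩ := List.mem_map.mp h
  have : d.edge = s(u, v) := by rw [SimpleGraph.Dart.edge, hdp]
  rw [← this, Walk.edges]
  exact List.mem_map_of_mem hd

lemma adj_of_dartsP {a b u v : V} {w : G.Walk a b} (h : (u, v) ∈ dartsP w) : G.Adj u v :=
  G.mem_edgeSet.mp (w.edges_subset_edgeSet (edge_of_dartsP h))

lemma dartsP_of_edge {a b u v : V} {w : G.Walk a b} (h : s(u, v) ∈ w.edges) :
    (u, v) ∈ dartsP w ∨ (v, u) ∈ dartsP w := by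
  rw [Walk.edges] at h
  obtain ⟨d, hd, hde⟩ := List.mem_map.mp h
  have hmem : d.toProd ∈ dartsP w := List.mem_map_of_mem hd
  rcases Sym2.eq_iff.mp hde with ⟨h1, h2⟩ | ⟨h1, h2⟩
  · left; rwa [show d.toProd = (u, v) by rw [← h1, ← h2]] at hmem
  · right; rwa [show d.toProd = (v, u) by rw [← h1, ← h2]] at hmem

lemma dartsP_nodup {a b : V} {w : G.Walk a b} (h : w.IsPath) : (dartsP w).Nodup := by
  have he : w.edges.Nodup := h.isTrail.edges_nodup
  rw [Walk.edges] at he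
  exact (List.Nodup.of_map _ he).map (fun d d' hdd => SimpleGraph.Dart.ext _ _ hdd)

lemma snd_mem_support {a b u v : V} {w : G.Walk a b} (h : (u, v) ∈ dartsP w) :
    v ∈ w.support := by
  obtain ⟨d, hd, hdp⟩ := List.mem_map.mp h
  have := w.dart_snd_mem_support_of_mem_darts hd
  rwa [show d.snd = v from congrArg Prod.snd hdp] at this

lemma not_oppo {a b u v : V} {w : G.Walk a b} (h : w.IsPath) (h1 : (u, v) ∈ dartsP w)
    (h2 : (v, u) ∈ dartsP w) : False := by
  induction w with
  | nil => simp at h1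
  | @cons a c b hadj w ih =>
    rw [dartsP_cons, List.mem_cons] at h1 h2
    have hns : a ∉ w.support := by
      have := h.support_nodup
      rw [Walk.support_cons, List.nodup_cons] at this
      exact this.1
    rcases h1 with h1 | h1 <;> rcases h2 with h2 | h2
    · have e2 : v = a := congrArg Prod.fst h2
      have e3 : v = c := congrArg Prod.snd h1
      have hac : a = c := e2.symm.trans e3
      exact G.irrefl (hac ▸ hadj)
    · -- h1 : (u,v) = (a,c), h2 : (v,u) ∈ dartsP w, so u = a ∈ support w
      have e1 : u = a := congrArg Prod.fst h1
      exact hns (e1 ▸ snd_mem_support h2)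
    · have e1 : v = a := congrArg Prod.fst h2
      exact hns (e1 ▸ snd_mem_support h1)
    · exact ih (h.of_cons) h1 h2

lemma walk_decomp {a t u v : V} (w : G.Walk a t) (h : (u, v) ∈ dartsP w) :
    ∃ (A : G.Walk a u) (B : G.Walk v t) (h' : G.Adj u v),
      w = A.append (Walk.cons h' B) := by
  induction w with
  | nil => simp at h
  | @cons a c b hadj w ih =>
    rw [dartsP_cons, List.mem_cons] at h
    rcases h with h | h
    · obtain ⟨e1, e2⟩ := Prod.mk.injEq _ _ _ _ ▸ h
      subst e1; subst e2
      exact ⟨Walk.nil, w, hadj, by rw [Walk.nil_append]⟩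
    · obtain ⟨A, B, h', rfl⟩ := ih h
      exact ⟨Walk.cons hadj A, B, h', by rw [Walk.cons_append]⟩

end Scratch

namespace Scratch2

lemma shared_aux {α : Type*} {ι : Type*} {M M' : ι → List α} {i j : ι} (hij : i ≠ j)
    {LA LB LC LD : List α} {d d' : α}
    (hMi : M i = LA ++ d :: LB) (hMj : M j = LC ++ d' :: LD)
    (hni : (M i).Nodup) (hnj : (M j).Nodup)
    (h'i : ∀ e ∈ M' i, e ∈ LA ∨ e ∈ LD) (h'j : ∀ e ∈ M' j, e ∈ LC ∨ e ∈ LB)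
    (h'other : ∀ x, x ≠ i → x ≠ j → M' x = M x) :
    ∀ e : α, (∃ a b, a ≠ b ∧ e ∈ M' a ∧ e ∈ M' b) → (∃ a b, a ≠ b ∧ e ∈ M a ∧ e ∈ M b) := by
  classical
  have hAi : ∀ e ∈ LA, e ∈ M i := fun e he => by rw [hMi]; exact List.mem_append_left _ he
  have hBi : ∀ e ∈ LB, e ∈ M i := fun e he => by
    rw [hMi]; exact List.mem_append_right _ (List.mem_cons_of_mem _ he)
  have hCj : ∀ e ∈ LC, e ∈ M j := fun e he => by rw [hMj]; exact List.mem_append_left _ he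
  have hDj : ∀ e ∈ LD, e ∈ M j := fun e he => by
    rw [hMj]; exact List.mem_append_right _ (List.mem_cons_of_mem _ he)
  have hdisjAB : ∀ e ∈ LA, e ∈ LB → False := by
    rw [hMi] at hni
    intro e heA heB
    exact (List.disjoint_of_nodup_append hni) heA (List.mem_cons_of_mem _ heB)
  have hdisjCD : ∀ e ∈ LC, e ∈ LD → False := by
    rw [hMj] at hnj
    intro e heC heD
    exact (List.disjoint_of_nodup_append hnj) heC (List.mem_cons_of_mem _ heD)
  rintro e ⟨a, b, hab, ha, hb⟩
  have main : ∀ x, e ∈ M' x →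
      (e ∈ M x ∧ x ≠ i ∧ x ≠ j) ∨ (x = i ∧ (e ∈ LA ∨ e ∈ LD)) ∨
        (x = j ∧ (e ∈ LC ∨ e ∈ LB)) := by
    intro x hx
    by_cases hxi : x = i
    · subst hxi; exact Or.inr (Or.inl ⟨rfl, h'i e hx⟩)
    by_cases hxj : x = j
    · subst hxj; exact Or.inr (Or.inr ⟨rfl, h'j e hx⟩)
    · exact Or.inl ⟨h'other x hxi hxj ▸ hx, hxi, hxj⟩
  rcases main a ha with ⟨haM, hai, haj⟩ | ⟨ha1, hA⟩ | ⟨ha1, hA⟩ <;>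
    rcases main b hb with ⟨hbM, hbi, hbj⟩ | ⟨hb1, hB⟩ | ⟨hb1, hB⟩
  · exact ⟨a, b, hab, haM, hbM⟩
  · rcases hB with hB | hB
    · exact ⟨a, i, hai, haM, hAi e hB⟩
    · exact ⟨a, j, haj, haM, hDj e hB⟩
  · rcases hB with hB | hB
    · exact ⟨a, j, haj, haM, hCj e hB⟩
    · exact ⟨a, i, hai, haM, hBi e hB⟩
  · rcases hA with hA | hA
    · exact ⟨i, b, Ne.symm hbi, hAi e hA, hbM⟩
    · exact ⟨j, b, Ne.symm hbj, hDj e hA, hbM⟩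
  · exact absurd (ha1.trans hb1.symm) hab
  · -- a = i, b = j
    rcases hA with hA | hA <;> rcases hB with hB | hB
    · exact ⟨i, j, hij, hAi e hA, hCj e hB⟩
    · exact absurd hB (fun hB => hdisjAB e hA hB)
    · exact absurd hB (fun hB => hdisjCD e hB hA)
    · exact ⟨j, i, hij.symm, hDj e hA, hBi e hB⟩
  · rcases hA with hA | hA
    · exact ⟨j, b, Ne.symm hbj, hCj e hA, hbM⟩
    · exact ⟨i, b, Ne.symm hbi, hBi e hA, hbM⟩
  · -- a = j, b = i
    rcases hA with hA | hA <;> rcases hB with hB | hB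
    · exact ⟨j, i, hij.symm, hCj e hA, hAi e hB⟩
    · exact absurd hB (fun hB => hdisjCD e hA hB)
    · exact absurd hB (fun hB => hdisjAB e hB hA)
    · exact ⟨i, j, hij, hBi e hA, hDj e hB⟩
  · exact absurd (ha1.trans hb1.symm) hab

end Scratch2

namespace Scratch
open SimpleGraph Walk

variable {V : Type*} {G : SimpleGraph V}

def sharedDartsW {s t : V} {p : ℕ} (P : Fin p → G.Walk s t) : Set (V × V) :=
  {e | ∃ i j, i ≠ j ∧ e ∈ dartsP (P i) ∧ e ∈ dartsP (P j)}

def Consistent {s t : V} {p : ℕ} (P : Fin p → G.Walk s t) : Prop :=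
  ∀ ⦃i j : Fin p⦄ ⦃u v : V⦄, i ≠ j → (u, v) ∈ dartsP (P i) → (v, u) ∈ dartsP (P j) → False

lemma surgery {s t : V} {p : ℕ} (P : Fin p → G.Walk s t) (hP : ∀ i, (P i).IsPath) :
    ∃ P' : Fin p → G.Walk s t, (∀ i, (P' i).IsPath) ∧
      sharedEdges P' ⊆ sharedEdges P ∧ sharedDartsW P' ⊆ sharedDartsW P ∧ Consistent P' := by
  classical
  suffices H : ∀ (n : ℕ) (P : Fin p → G.Walk s t), (∀ i, (P i).IsPath) →
      (∑ i, (P i).length) = n →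
      ∃ P' : Fin p → G.Walk s t, (∀ i, (P' i).IsPath) ∧
        sharedEdges P' ⊆ sharedEdges P ∧ sharedDartsW P' ⊆ sharedDartsW P ∧ Consistent P' by
    exact H _ P hP rfl
  intro n
  induction n using Nat.strong_induction_on with
  | _ n ih =>
    intro P hP hn
    by_cases hc : Consistent P
    · exact ⟨P, hP, subset_rfl, subset_rfl, hc⟩
    obtain ⟨i, j, u, v, hij, h1, h2⟩ :
        ∃ i j u v, i ≠ j ∧ (u, v) ∈ dartsP (P i) ∧ (v, u) ∈ dartsP (P j) := by
      by_contra hno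
      push_neg at hno
      exact hc fun i j u v hij h1 h2 => hno i j u v hij h1 h2
    obtain ⟨A, B, hadj, hPi⟩ := walk_decomp (P i) h1
    obtain ⟨C, D, hadj', hPj⟩ := walk_decomp (P j) h2
    set Wi := (A.append D).bypass with hWi
    set Wj := (C.append B).bypass with hWjdef
    set P'' := Function.update (Function.update P i Wi) j Wj with hP''def
    have hP''i : P'' i = Wi := by
      rw [hP''def, Function.update_of_ne hij, Function.update_self]
    have hP''j : P'' j = Wj := by rw [hP''def, Function.update_self]
    have hP''other : ∀ x, x ≠ i → x ≠ j → P'' x = P x := by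
      intro x hxi hxj
      rw [hP''def, Function.update_of_ne hxj, Function.update_of_ne hxi]
    have hpath'' : ∀ x, (P'' x).IsPath := by
      intro x
      by_cases hxj : x = j
      · subst hxj; rw [hP''j]; exact Walk.bypass_isPath _
      by_cases hxi : x = i
      · subst hxi; rw [hP''i]; exact Walk.bypass_isPath _
      · rw [hP''other x hxi hxj]; exact hP x
    -- length decrease
    have hiej : i ∈ Finset.univ.erase j := Finset.mem_erase.mpr ⟨hij, Finset.mem_univ i⟩
    have hsplit : ∀ Q : Fin p → G.Walk s t, ∑ x, (Q x).length
        = (Q j).length + ((Q i).length + ∑ x ∈ (Finset.univ.erase j).erase i, (Q x).length) := by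
      intro Q
      rw [← Finset.add_sum_erase _ _ (Finset.mem_univ j), ← Finset.add_sum_erase _ _ hiej]
    have hrest : ∑ x ∈ (Finset.univ.erase j).erase i, (P'' x).length
        = ∑ x ∈ (Finset.univ.erase j).erase i, (P x).length := by
      refine Finset.sum_congr rfl fun x hx => ?_
      rcases Finset.mem_erase.mp hx with ⟨hxi, hx2⟩
      rw [hP''other x hxi (Finset.mem_erase.mp hx2).1]
    have hWjlen : Wj.length ≤ C.length + B.length :=
      le_trans (Walk.length_bypass_le _) (le_of_eq (Walk.length_append _ _))
    have hWilen : Wi.length ≤ A.length + D.length :=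
      le_trans (Walk.length_bypass_le _) (le_of_eq (Walk.length_append _ _))
    have hPilen : (P i).length = A.length + (B.length + 1) := by
      rw [hPi, Walk.length_append, Walk.length_cons]
    have hPjlen : (P j).length = C.length + (D.length + 1) := by
      rw [hPj, Walk.length_append, Walk.length_cons]
    have hlen : (∑ x, (P'' x).length) < n := by
      rw [← hn, hsplit P'', hsplit P, hrest, hP''i, hP''j, hPilen, hPjlen]
      omega
    -- darts subsets
    have hWi_sub : ∀ e ∈ dartsP Wi, e ∈ dartsP A ∨ e ∈ dartsP D := by
      intro e he
      have : e ∈ dartsP (A.append D) :=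
        List.map_subset _ (Walk.darts_bypass_subset _) he
      rw [dartsP_append, List.mem_append] at this
      exact this
    have hWj_sub : ∀ e ∈ dartsP Wj, e ∈ dartsP C ∨ e ∈ dartsP B := by
      intro e he
      have : e ∈ dartsP (C.append B) :=
        List.map_subset _ (Walk.darts_bypass_subset _) he
      rw [dartsP_append, List.mem_append] at this
      exact this
    have hdPi : dartsP (P i) = dartsP A ++ (u, v) :: dartsP B := by
      rw [hPi, dartsP_append, dartsP_cons]
    have hdPj : dartsP (P j) = dartsP C ++ (v, u) :: dartsP D := by
      rw [hPj, dartsP_append, dartsP_cons]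
    have hkey_d : sharedDartsW P'' ⊆ sharedDartsW P := by
      intro e he
      exact Scratch2.shared_aux hij hdPi hdPj (dartsP_nodup (hP i)) (dartsP_nodup (hP j))
        (fun e he => hWi_sub e (hP''i ▸ he)) (fun e he => hWj_sub e (hP''j ▸ he))
        (fun x hxi hxj => congrArg dartsP (hP''other x hxi hxj)) e he
    -- edges subsets
    have hePi : (P i).edges = A.edges ++ s(u, v) :: B.edges := by
      rw [hPi, Walk.edges_append, Walk.edges_cons]
    have hePj : (P j).edges = C.edges ++ s(v, u) :: D.edges := by
      rw [hPj, Walk.edges_append, Walk.edges_cons]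
    have hWie_sub : ∀ e ∈ Wi.edges, e ∈ A.edges ∨ e ∈ D.edges := by
      intro e he
      have : e ∈ (A.append D).edges := Walk.edges_bypass_subset _ he
      rw [Walk.edges_append, List.mem_append] at this
      exact this
    have hWje_sub : ∀ e ∈ Wj.edges, e ∈ C.edges ∨ e ∈ B.edges := by
      intro e he
      have : e ∈ (C.append B).edges := Walk.edges_bypass_subset _ he
      rw [Walk.edges_append, List.mem_append] at this
      exact this
    have hkey_e : sharedEdges P'' ⊆ sharedEdges P := by
      intro e he
      exact Scratch2.shared_aux hij hePi hePj ((hP i).isTrail.edges_nodup)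
        ((hP j).isTrail.edges_nodup)
        (fun e he => hWie_sub e (hP''i ▸ he)) (fun e he => hWje_sub e (hP''j ▸ he))
        (fun x hxi hxj => congrArg Walk.edges (hP''other x hxi hxj)) e he
    obtain ⟨P₃, h₃p, h₃e, h₃d, h₃c⟩ := ih _ hlen P'' hpath'' rfl
    exact ⟨P₃, h₃p, h₃e.trans hkey_e, h₃d.trans hkey_d, h₃c⟩

end Scratch

namespace Scratch
open SimpleGraph Walk

variable {V : Type*} {G : SimpleGraph V}

lemma sharedEdges_finite {s t : V} {p : ℕ} (P : Fin p → G.Walk s t) :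
    (sharedEdges P).Finite := by
  refine Set.Finite.subset (Set.finite_iUnion fun i : Fin p => (P i).edges.finite_toSet) ?_
  rintro e ⟨i, j, _, he, _⟩
  exact Set.mem_iUnion.mpr ⟨i, he⟩

lemma sharedDartsW_finite {s t : V} {p : ℕ} (P : Fin p → G.Walk s t) :
    (sharedDartsW P).Finite := by
  refine Set.Finite.subset (Set.finite_iUnion fun i : Fin p => (dartsP (P i)).finite_toSet) ?_
  rintro e ⟨i, j, _, he, _⟩
  exact Set.mem_iUnion.mpr ⟨i, he⟩

lemma sharedArcs_finite {p : ℕ} (Q : Fin p → List V) : (sharedArcs Q).Finite := by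
  refine Set.Finite.subset (Set.finite_iUnion fun i : Fin p => (arcs (Q i)).finite_toSet) ?_
  rintro e ⟨i, j, _, he, _⟩
  exact Set.mem_iUnion.mpr ⟨i, he⟩

lemma exists_walk {t : V} :
    ∀ (l : List V) (a : V), List.Chain' G.Adj (a :: l) → (a :: l).getLast? = some t →
      ∃ w : G.Walk a t, w.support = a :: l := by
  intro l
  induction l with
  | nil =>
    intro a _ hl
    obtain rfl : a = t := by simpa using hl
    exact ⟨Walk.nil, rfl⟩
  | cons b l ih =>
    intro a hch hl
    rw [show List.Chain' G.Adj (a :: b :: l) ↔ _ from List.isChain_cons_cons] at hch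
    obtain ⟨w, hw⟩ := ih b hch.2 (by rwa [List.getLast?_cons_cons] at hl)
    exact ⟨Walk.cons hch.1 w, by rw [Walk.support_cons, hw]⟩

lemma no_both {s t : V} {p : ℕ} {P : Fin p → G.Walk s t} (hp : ∀ i, (P i).IsPath)
    (hc : Consistent P) {u v : V} (h1 : (u, v) ∈ sharedDartsW P)
    (h2 : (v, u) ∈ sharedDartsW P) : False := by
  obtain ⟨a, b, hab, ha, hb⟩ := h1
  obtain ⟨c, d, hcd, hc2, hd⟩ := h2
  by_cases hac : a = c
  · exact not_oppo (hp a) ha (hac ▸ hc2)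
  · exact hc hac ha hc2

end Scratch

theorem stmt12 {V : Type*} (G : SimpleGraph V) (s t : V) (hst : s ≠ t) (p k : ℕ) :
    (∃ P : Fin p → G.Walk s t,
      (∀ i, (P i).IsPath) ∧ (sharedEdges P).ncard ≤ k) ↔
    (∃ Q : Fin p → List V,
      (∀ i, IsRPath G.Adj s t (Q i)) ∧ (sharedArcs Q).ncard ≤ k) := by
  constructor
  · rintro ⟨P, hPpath, hPk⟩
    obtain ⟨P', hp', he', hd', hc'⟩ := Scratch.surgery P hPpath
    refine ⟨fun i => (P' i).support, fun i => ?_, ?_⟩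
    · refine ⟨SimpleGraph.Walk.isChain_adj_support _, (hp' i).support_nodup, ?_, ?_⟩
      · show ((P' i).support).head? = some s
        rw [(P' i).support_eq_cons]; rfl
      · show ((P' i).support).getLast? = some t
        rw [List.getLast?_eq_getLast (P' i).support_ne_nil, (P' i).getLast_support]
    · have harcs : sharedArcs (fun i => (P' i).support) = Scratch.sharedDartsW P' := by
        ext e
        simp only [sharedArcs, Scratch.sharedDartsW, Set.mem_setOf_eq, Scratch.arcs_support]
      rw [harcs]
      set f : V × V → Sym2 V := fun e => s(e.1, e.2) with hf
      have hinj : Set.InjOn f (Scratch.sharedDartsW P') := by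
        rintro ⟨u, v⟩ hm ⟨x, y⟩ hm' heq
        have heq' : s(u, v) = s(x, y) := heq
        rcases Sym2.eq_iff.mp heq' with ⟨h1, h2⟩ | ⟨h1, h2⟩
        · rw [h1, h2]
        · have hm'' : (v, u) ∈ Scratch.sharedDartsW P' := by rw [h2, h1]; exact hm'
          exact (Scratch.no_both hp' hc' hm hm'').elim
      have hsub : f '' Scratch.sharedDartsW P' ⊆ sharedEdges P' := by
        rintro e ⟨⟨u, v⟩, ⟨a, b, hab, ha, hb⟩, rfl⟩
        exact ⟨a, b, hab, Scratch.edge_of_dartsP ha, Scratch.edge_of_dartsP hb⟩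
      calc (Scratch.sharedDartsW P').ncard = (f '' Scratch.sharedDartsW P').ncard :=
            (Set.ncard_image_of_injOn hinj).symm
        _ ≤ (sharedEdges P').ncard := Set.ncard_le_ncard hsub (Scratch.sharedEdges_finite P')
        _ ≤ (sharedEdges P).ncard := Set.ncard_le_ncard he' (Scratch.sharedEdges_finite P)
        _ ≤ k := hPk
  · rintro ⟨Q, hQ, hQk⟩
    have hex : ∀ i, ∃ w : G.Walk s t, w.support = Q i := by
      intro i
      obtain ⟨hch, hnd, hh, hl⟩ := hQ i
      cases hq : Q i with
      | nil => rw [hq] at hh; simp at hh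
      | cons a l =>
        rw [hq] at hh hl hch
        obtain rfl : a = s := by simpa using hh
        obtain ⟨w, hw⟩ := Scratch.exists_walk l a hch hl
        exact ⟨w, hw⟩
    choose P hPsupp using hex
    have hPpath : ∀ i, (P i).IsPath := fun i =>
      (SimpleGraph.Walk.isPath_def _).mpr (by rw [hPsupp i]; exact (hQ i).2.1)
    obtain ⟨P', hp', he', hd', hc'⟩ := Scratch.surgery P hPpath
    have heq : Scratch.sharedDartsW P = sharedArcs Q := by
      ext e
      simp only [sharedArcs, Scratch.sharedDartsW, Set.mem_setOf_eq, ← hPsupp,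
        Scratch.arcs_support]
    refine ⟨P', hp', ?_⟩
    set f : V × V → Sym2 V := fun e => s(e.1, e.2) with hf
    have hsub : sharedEdges P' ⊆ f '' Scratch.sharedDartsW P' := by
      intro e he
      obtain ⟨i, j, hij, hei, hej⟩ := he
      induction e using Sym2.ind with
      | _ u v =>
        rcases Scratch.dartsP_of_edge hei with h1 | h1 <;>
          rcases Scratch.dartsP_of_edge hej with h2 | h2
        · exact ⟨(u, v), ⟨i, j, hij, h1, h2⟩, rfl⟩
        · exact absurd h2 fun h2 => hc' hij h1 h2
        · exact absurd h2 fun h2 => hc' hij h1 h2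
        · exact ⟨(v, u), ⟨i, j, hij, h1, h2⟩, Sym2.eq_swap⟩
    calc (sharedEdges P').ncard ≤ (f '' Scratch.sharedDartsW P').ncard :=
          Set.ncard_le_ncard hsub ((Scratch.sharedDartsW_finite P').image f)
      _ ≤ (Scratch.sharedDartsW P').ncard := Set.ncard_image_le (Scratch.sharedDartsW_finite P')
      _ ≤ (sharedArcs Q).ncard := by
          rw [← heq]; exact Set.ncard_le_ncard hd' (Scratch.sharedDartsW_finite P)
      _ ≤ k := hQk
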